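/- For a prime p, real s > 1, and integers 1 < k < m, the generating series of q*_{k,m} at p satisfies Σ_{α≥0} q*_{k,m}(p^α)/p^{αs} = 1 + ((1/p^s - 1/p^{ks})/(1 - 1/p^s)) · (1/(1 - 1/p^{ms})), which equals (1 - 1/p^s)^{-1}(1 - 1/p^{ms})^{-1}(1 - 1/p^{ks} - 1/p^{ms} + 1/p^{(m+1)s}). -/
import Mathlib

set_option maxHeartbeats 1000000

/-- Characteristic function of Q*_{k,m}: every prime exponent α satisfies α mod m ∈ {1,…,k-1}. -/
def qstar (k m n : ℕ) : ℤ :=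
  if n ≠ 0 ∧ ∀ p ∈ n.primeFactors,
      0 < n.factorization p % m ∧ n.factorization p % m < k then 1 else 0

theorem euler_factor_qstar (p : ℕ) (hp : p.Prime) (s : ℝ) (hs : 1 < s)
    (k m : ℕ) (hk : 1 < k) (hkm : k < m) :
    (∑' α : ℕ, (qstar k m (p ^ α) : ℝ) / (p : ℝ) ^ ((α : ℝ) * s)) =
        1 + ((1 / (p : ℝ) ^ s - 1 / (p : ℝ) ^ ((k : ℝ) * s)) / (1 - 1 / (p : ℝ) ^ s)) *
          (1 / (1 - 1 / (p : ℝ) ^ ((m : ℝ) * s))) ∧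
    (∑' α : ℕ, (qstar k m (p ^ α) : ℝ) / (p : ℝ) ^ ((α : ℝ) * s)) =
        (1 - 1 / (p : ℝ) ^ s)⁻¹ * (1 - 1 / (p : ℝ) ^ ((m : ℝ) * s))⁻¹ *
          (1 - 1 / (p : ℝ) ^ ((k : ℝ) * s) - 1 / (p : ℝ) ^ ((m : ℝ) * s) +
            1 / (p : ℝ) ^ (((m : ℝ) + 1) * s)) := by
  have hm0 : m ≠ 0 := by omega
  haveI : NeZero m := ⟨hm0⟩
  have hp1 : (1 : ℝ) < (p : ℝ) := by exact_mod_cast hp.one_lt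
  have hp0 : (0 : ℝ) < (p : ℝ) := by linarith
  have hps : (1 : ℝ) < (p : ℝ) ^ s := by
    rw [Real.one_lt_rpow_iff_of_pos hp0]; left; exact ⟨hp1, by linarith⟩
  have hps0 : (0 : ℝ) < (p : ℝ) ^ s := by linarith
  obtain ⟨x, hxdef⟩ : ∃ x : ℝ, 1 / (p : ℝ) ^ s = x := ⟨_, rfl⟩
  have hx0 : 0 < x := by rw [← hxdef]; positivity
  have hx1 : x < 1 := by rw [← hxdef, div_lt_one hps0]; exact hps
  -- rpow to pow
  have hpow : ∀ α : ℕ, (p : ℝ) ^ ((α : ℝ) * s) = ((p : ℝ) ^ s) ^ α := by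
    intro α
    rw [mul_comm, Real.rpow_mul hp0.le, Real.rpow_natCast]
  have hxpow : ∀ α : ℕ, 1 / (p : ℝ) ^ ((α : ℝ) * s) = x ^ α := by
    intro α; rw [hpow, ← hxdef, one_div, one_div, inv_pow]
  -- pointwise description of the terms
  have key : ∀ α : ℕ, (qstar k m (p ^ α) : ℝ) / (p : ℝ) ^ ((α : ℝ) * s) =
      (if α = 0 then (1 : ℝ) else 0) +
        (if 0 < α % m ∧ α % m < k then x ^ α else 0) := by
    intro α
    rcases eq_or_ne α 0 with rfl | hα
    · simp [qstar, Nat.mod_self]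
    · have h1 : (p ^ α).primeFactors = {p} := by
        rw [Nat.primeFactors_pow p hα, hp.primeFactors]
      have h2 : (p ^ α).factorization p = α := by simp [hp.factorization_pow]
      have hcond' : (p ^ α ≠ 0 ∧ ∀ q ∈ (p ^ α).primeFactors,
          0 < (p ^ α).factorization q % m ∧ (p ^ α).factorization q % m < k) ↔
          (0 < α % m ∧ α % m < k) := by
        constructor
        · rintro ⟨-, h⟩
          have h3 := h p (by rw [h1]; exact Finset.mem_singleton_self p)
          rwa [h2] at h3
        · intro h
          refine ⟨pow_ne_zero _ hp.pos.ne', fun q hqmem => ?_⟩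
          rw [h1, Finset.mem_singleton] at hqmem
          subst hqmem; rwa [h2]
      have hq : (qstar k m (p ^ α) : ℝ) =
          if 0 < α % m ∧ α % m < k then 1 else 0 := by
        rw [qstar, if_congr hcond' rfl rfl]
        split_ifs <;> simp
      rw [hq, if_neg hα, zero_add]
      split_ifs
      · rw [← hxpow α]
      · exact zero_div _
  -- summability of the two summands
  have hsum1 : Summable (fun α : ℕ => if α = 0 then (1 : ℝ) else 0) := by
    apply summable_of_finite_support
    apply Set.Finite.subset (Set.finite_singleton 0)
    intro α hα
    by_contra h
    simp only [Function.mem_support] at hα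
    rw [if_neg (by simpa using h)] at hα
    exact hα rfl
  have hsum2 : Summable (fun α : ℕ => if 0 < α % m ∧ α % m < k then x ^ α else 0) := by
    apply Summable.of_nonneg_of_le (fun α => by positivity)
      (fun α => ?_) (summable_geometric_of_lt_one hx0.le hx1)
    split
    · exact le_refl _
    · positivity
  -- compute the second sum via division with remainder
  have hxm1 : x ^ m < 1 := pow_lt_one₀ hx0.le hx1 hm0
  have hxm0 : (0:ℝ) < x ^ m := by positivity
  have h1xm : (1 : ℝ) - x ^ m ≠ 0 := by nlinarith
  have h1x : (1 : ℝ) - x ≠ 0 := by nlinarith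
  have t2 : (∑' α : ℕ, if 0 < α % m ∧ α % m < k then x ^ α else 0) =
      (x - x ^ k) / (1 - x) * (1 / (1 - x ^ m)) := by
    rw [← Equiv.tsum_eq (Nat.divModEquiv m).symm]
    have F : ℕ → ℝ := fun q => (x ^ m) ^ q
    set G : Fin m → ℝ := fun r => if 0 < (r : ℕ) ∧ (r : ℕ) < k then x ^ (r : ℕ) else 0 with hGdef
    have heq : ∀ qr : ℕ × Fin m,
        (if 0 < ((Nat.divModEquiv m).symm qr) % m ∧ ((Nat.divModEquiv m).symm qr) % m < k
          then x ^ ((Nat.divModEquiv m).symm qr) else 0) =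
        (fun q r => (x ^ m) ^ q * G r) qr.1 qr.2 := by
      rintro ⟨q, r⟩
      have hrm := r.isLt
      have hmod : (q * m + (r : ℕ)) % m = (r : ℕ) := by
        simp [Nat.mul_add_mod', Nat.mod_eq_of_lt hrm]
      simp only [Nat.divModEquiv, Equiv.coe_fn_symm_mk, hmod, hGdef]
      split
      · rw [pow_add]; ring
      · rw [mul_zero]
    have hG : Summable G := Summable.of_finite
    have hF : Summable (fun q : ℕ => (x ^ m) ^ q) :=
      summable_geometric_of_lt_one hxm0.le hxm1
    have hFG : Summable (fun qr : ℕ × Fin m => (x ^ m) ^ qr.1 * G qr.2) := by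
      apply Summable.mul_of_nonneg hF hG
      · intro q; positivity
      · intro r
        rw [hGdef]
        dsimp only
        split
        · positivity
        · exact le_refl _
    rw [tsum_congr heq, Summable.tsum_prod' hFG (fun q => hG.mul_left ((x ^ m) ^ q))]
    have hGsum : (∑' r : Fin m, G r) = (x - x ^ k) / (1 - x) := by
      rw [tsum_fintype, hGdef]
      have hfin : (∑ r : Fin m, if 0 < (r : ℕ) ∧ (r : ℕ) < k then x ^ (r : ℕ) else 0)
          = ∑ r ∈ Finset.range m, if 0 < r ∧ r < k then x ^ r else 0 := by
        rw [Finset.sum_range fun r => if 0 < r ∧ r < k then x ^ r else 0]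
      rw [hfin, ← Finset.sum_filter]
      have hfil : (Finset.range m).filter (fun r => 0 < r ∧ r < k) = Finset.Ico 1 k := by
        ext r
        simp only [Finset.mem_filter, Finset.mem_range, Finset.mem_Ico]
        omega
      rw [hfil, geom_sum_Ico (by intro h; exact h1x (by rw [h]; ring) : x ≠ 1) (by omega : 1 ≤ k)]
      rw [pow_one]
      rw [div_eq_div_iff (fun h => h1x (by linarith [sub_eq_zero.mp h])) h1x]
      ring
    have hinner : ∀ q : ℕ, (∑' r : Fin m, (x ^ m) ^ q * G r) =
        ((x - x ^ k) / (1 - x)) * (x ^ m) ^ q := by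
      intro q
      rw [tsum_mul_left, hGsum, mul_comm]
    rw [tsum_congr hinner, tsum_mul_left, tsum_geometric_of_lt_one hxm0.le hxm1]
    rw [one_div]
  -- total sum
  have total : (∑' α : ℕ, (qstar k m (p ^ α) : ℝ) / (p : ℝ) ^ ((α : ℝ) * s)) =
      1 + (x - x ^ k) / (1 - x) * (1 / (1 - x ^ m)) := by
    rw [tsum_congr key, Summable.tsum_add hsum1 hsum2, t2]
    congr 1
    exact tsum_ite_eq 0 1
  -- rewrite powers in the statement
  have hks : 1 / (p : ℝ) ^ ((k : ℝ) * s) = x ^ k := hxpow k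
  have hms : 1 / (p : ℝ) ^ ((m : ℝ) * s) = x ^ m := hxpow m
  have hm1s : 1 / (p : ℝ) ^ (((m : ℝ) + 1) * s) = x ^ (m + 1) := by
    have h := hxpow (m + 1)
    rwa [Nat.cast_add, Nat.cast_one] at h
  constructor
  · rw [total, hks, hms, hxdef]
  · rw [total, hks, hms, hm1s, hxdef]
    field_simp
    ring
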